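/- Let n ≥ 5 be an odd integer, let i be any index (mod n), set α = sin(π/(2n)) and ω_A = ½(ω_{i+(n−1)/2}^n + ω_{i+(n+1)/2}^n). If n ≡ 3 (mod 4), set j = (n+1)/4 and the sign to minus; if n ≡ 1 (mod 4), set j = (n−1)/4 and the sign to plus. Then ½(ω_{i+j}^n + ω_{i+(n−j)}^n) = (1/(2∓2α)) ω_A + ((1∓2α)/(2∓2α)) ω_i^n (upper signs for n ≡ 3, lower signs for n ≡ 1 mod 4). -/

import Mathlib

open Real

noncomputable section

/-- The ambient vector space ℝ³. -/
abbrev V3 : Type := Fin 3 → ℝ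

/-- The linear functional on ℝ³ given by the Euclidean inner product with `v`. -/
def dotL (v : V3) : V3 →ₗ[ℝ] ℝ :=
  ∑ i, v i • (LinearMap.proj i : V3 →ₗ[ℝ] ℝ)

/-- The unit effect `u (x, y, z) = z`. -/
def uEff : V3 →ₗ[ℝ] ℝ := LinearMap.proj 2

/-- `e` is an effect on `Ω`: a linear functional with values in `[0,1]` on `Ω`. -/
def IsEffect (Ω : Set V3) (e : V3 →ₗ[ℝ] ℝ) : Prop :=
  ∀ ω ∈ Ω, 0 ≤ e ω ∧ e ω ≤ 1

/-- The states `ω 0, …, ω (l-1)` are perfectly distinguishable in `Ω`: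
there are effects summing to the unit effect with `e i (ω j) = δ_{ij}`. -/
def PerfDist (Ω : Set V3) {l : ℕ} (ω : Fin l → V3) : Prop :=
  ∃ e : Fin l → (V3 →ₗ[ℝ] ℝ),
    (∀ i, IsEffect Ω (e i)) ∧ (∑ i, e i) = uEff ∧
    ∀ i j, e i (ω j) = if i = j then 1 else 0

/-- `S` is an entropy of mixing on `Ω`: it vanishes on extreme points, and for every
finite family of perfectly distinguishable states and every probability weight,
`S (Σ pᵢ ωᵢ) = Σ pᵢ S(ωᵢ) − Σ pᵢ log pᵢ` (note `Real.log 0 = 0`, so `0 log 0 = 0`). -/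
def IsEntropyOfMixing (Ω : Set V3) (S : V3 → ℝ) : Prop :=
  (∀ ω ∈ Set.extremePoints ℝ Ω, S ω = 0) ∧
  ∀ (l : ℕ) (ω : Fin l → V3), (∀ j, ω j ∈ Ω) → PerfDist Ω ω →
    ∀ p : Fin l → ℝ, (∀ i, 0 ≤ p i) → (∑ i, p i) = 1 →
      S (∑ i, p i • ω i) = (∑ i, p i * S (ω i)) - ∑ i, p i * Real.log (p i)

/-- `r_n = √(1 / cos (π/n))`. -/
def rn (n : ℕ) : ℝ := Real.sqrt (1 / Real.cos (π / n))

/-- The pure states `ω_i^n` of the `n`-gon theory (indices mod `n` via periodicity). -/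
def pur (n : ℕ) (i : ℤ) : V3 :=
  ![rn n * Real.cos (2 * π * i / n), rn n * Real.sin (2 * π * i / n), 1]

/-- The `n`-gon state space `Ω_n`: the convex hull of the `n` pure states. -/
def Omega (n : ℕ) : Set V3 :=
  convexHull ℝ {x : V3 | ∃ i : Fin n, x = pur n (i : ℤ)}

/-- The extreme effect `e_i^n` for even `n`. -/
def effE (n : ℕ) (i : ℤ) : V3 →ₗ[ℝ] ℝ :=
  dotL ((1/2 : ℝ) •
    ![rn n * Real.cos ((2*i-1) * π / n), rn n * Real.sin ((2*i-1) * π / n), 1])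

/-- The extreme effect `e_i^n` for odd `n`. -/
def effO (n : ℕ) (i : ℤ) : V3 →ₗ[ℝ] ℝ :=
  dotL ((1/(1 + rn n ^ 2)) •
    ![rn n * Real.cos (2*i*π/n), rn n * Real.sin (2*i*π/n), 1])

/-- The disk state space `Ω_∞ = {(x,y,1) : x² + y² ≤ 1}`. -/
def OmegaInf : Set V3 := {x : V3 | x 2 = 1 ∧ (x 0)^2 + (x 1)^2 ≤ 1}

/-- The pure states `ω_θ^∞` of the disk theory. -/
def purInf (θ : ℝ) : V3 := ![Real.cos θ, Real.sin θ, 1]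

/-- The extreme effects `e_θ^∞` of the disk theory. -/
def effInf (θ : ℝ) : V3 →ₗ[ℝ] ℝ :=
  dotL ((1/2 : ℝ) • ![Real.cos θ, Real.sin θ, 1])

/-- The binary (1-bit Shannon) entropy `H(p) = −p log p − (1−p) log (1−p)`. -/
def H (p : ℝ) : ℝ := -(p * Real.log p) - (1 - p) * Real.log (1 - p)
set_option maxHeartbeats 2000000 in
/-- For odd `n ≥ 5`, with `α = sin(π/(2n))` and `ω_A = ½(ω_{i+(n−1)/2} + ω_{i+(n+1)/2})`:
if `n = 4k+3` (so `j = (n+1)/4 = k+1`) then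
`½(ω_{i+j} + ω_{i+(n−j)}) = (1/(2−2α)) ω_A + ((1−2α)/(2−2α)) ω_i`, and
if `n = 4k+1` (so `j = (n−1)/4 = k`) then
`½(ω_{i+j} + ω_{i+(n−j)}) = (1/(2+2α)) ω_A + ((1+2α)/(2+2α)) ω_i`. -/
theorem stmt12 (n : ℕ) (hn : 5 ≤ n) (i : ℤ) :
    (∀ k : ℕ, n = 4 * k + 3 →
      (1/2 : ℝ) • (pur n (i + (k+1)) + pur n (i + ((n : ℤ) - (k+1))))
        = (1/(2 - 2 * Real.sin (π/(2*n)))) •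
            ((1/2 : ℝ) • (pur n (i + (2*k+1)) + pur n (i + (2*k+2))))
          + ((1 - 2 * Real.sin (π/(2*n)))/(2 - 2 * Real.sin (π/(2*n)))) • pur n i) ∧
    (∀ k : ℕ, n = 4 * k + 1 →
      (1/2 : ℝ) • (pur n (i + k) + pur n (i + ((n : ℤ) - k)))
        = (1/(2 + 2 * Real.sin (π/(2*n)))) •
            ((1/2 : ℝ) • (pur n (i + (2*k)) + pur n (i + (2*k+1))))
          + ((1 + 2 * Real.sin (π/(2*n)))/(2 + 2 * Real.sin (π/(2*n)))) • pur n i) :=  by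
  constructor
  · intro k hk
    subst hk
    have hN0 : (4*(k:ℝ)+3) ≠ 0 := by positivity
    set θ : ℝ := 2 * π * (i:ℝ) / (4*(k:ℝ)+3) with hθ
    set u : ℝ := π / (2*(4*(k:ℝ)+3)) with hu
    have a1 : 2 * π * ((i : ℝ) + ((k:ℝ)+1)) / (4*(k:ℝ)+3) = θ + u + π/2 := by
      rw [hθ, hu]; field_simp; ring
    have a2 : 2 * π * ((i : ℝ) + (4*(k:ℝ)+3 - ((k:ℝ)+1))) / (4*(k:ℝ)+3)
        = θ - u + π + π/2 := by
      rw [hθ, hu]; field_simp; ring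
    have b1 : 2 * π * ((i : ℝ) + (2*(k:ℝ)+1)) / (4*(k:ℝ)+3) = θ - (u + u) + π := by
      rw [hθ, hu]; field_simp; ring
    have b2 : 2 * π * ((i : ℝ) + (2*(k:ℝ)+2)) / (4*(k:ℝ)+3) = θ + (u + u) + π := by
      rw [hθ, hu]; field_simp; ring
    have hs : Real.sin u < 1 := by
      have h1 : Real.sin u ≤ u := Real.sin_le (by rw [hu]; positivity)
      have h2 : u < 1 := by
        rw [hu, div_lt_one (by positivity)]
        nlinarith [Real.pi_lt_d2, (Nat.cast_nonneg k : (0:ℝ) ≤ (k:ℝ))]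
      linarith
    have hden : (2 : ℝ) - 2 * Real.sin u ≠ 0 := by intro h; nlinarith
    have hden' : (1 : ℝ) - Real.sin u ≠ 0 := by intro h; linarith
    have pyth := Real.sin_sq_add_cos_sq u
    funext x
    fin_cases x <;>
      · simp only [pur, Pi.smul_apply, Pi.add_apply, smul_eq_mul]
        push_cast
        norm_num [Matrix.cons_val_zero, Matrix.cons_val_one, Matrix.head_cons]
        try rw [a1, a2, b1, b2]
        try simp only [Real.cos_add, Real.sin_add, Real.cos_sub, Real.sin_sub, Real.cos_pi,
          Real.sin_pi, Real.cos_pi_div_two, Real.sin_pi_div_two]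
        try rw [← hu]
        try rw [← hθ]
        have hc : Real.cos u * Real.cos u = 1 - Real.sin u * Real.sin u := by
          nlinarith [pyth]
        try simp only [hc]
        field_simp
        ring
  · intro k hk
    subst hk
    have hN0 : (4*(k:ℝ)+1) ≠ 0 := by positivity
    set θ : ℝ := 2 * π * (i:ℝ) / (4*(k:ℝ)+1) with hθ
    set u : ℝ := π / (2*(4*(k:ℝ)+1)) with hu
    have a1 : 2 * π * ((i : ℝ) + (k:ℝ)) / (4*(k:ℝ)+1) = θ - u + π/2 := by
      rw [hθ, hu]; field_simp; ring
    have a2 : 2 * π * ((i : ℝ) + (4*(k:ℝ)+1 - (k:ℝ))) / (4*(k:ℝ)+1)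
        = θ + u + π + π/2 := by
      rw [hθ, hu]; field_simp; ring
    have b1 : 2 * π * ((i : ℝ) + 2*(k:ℝ)) / (4*(k:ℝ)+1) = θ - (u + u) + π := by
      rw [hθ, hu]; field_simp; ring
    have b2 : 2 * π * ((i : ℝ) + (2*(k:ℝ)+1)) / (4*(k:ℝ)+1) = θ + (u + u) + π := by
      rw [hθ, hu]; field_simp; ring
    have hsp : 0 < Real.sin u := by
      apply Real.sin_pos_of_pos_of_lt_pi
      · rw [hu]; positivity
      · rw [hu]
        rw [div_lt_iff₀ (by positivity)]
        nlinarith [Real.pi_pos, (Nat.cast_nonneg k : (0:ℝ) ≤ (k:ℝ))]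
    have hden : (2 : ℝ) + 2 * Real.sin u ≠ 0 := by positivity
    have pyth := Real.sin_sq_add_cos_sq u
    funext x
    fin_cases x <;>
      · simp only [pur, Pi.smul_apply, Pi.add_apply, smul_eq_mul]
        push_cast
        norm_num [Matrix.cons_val_zero, Matrix.cons_val_one, Matrix.head_cons]
        try rw [a1, a2, b1, b2]
        try simp only [Real.cos_add, Real.sin_add, Real.cos_sub, Real.sin_sub, Real.cos_pi,
          Real.sin_pi, Real.cos_pi_div_two, Real.sin_pi_div_two]
        try rw [← hu]
        try rw [← hθ]
        have hc : Real.cos u * Real.cos u = 1 - Real.sin u * Real.sin u := by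
          nlinarith [pyth]
        try simp only [hc]
        field_simp
        ring
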